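/- Let X be a random vector in R^p with density f ≤ (2r̄)^{-p} everywhere. Let ρ be a metric and h : Z → R^p be L_h-Lipschitz w.r.t. ρ, κ : R_+ → [0,1] a nonincreasing kernel with κ(u)=0 for u>1, and V_κ = ∫_{R^p_+} κ(‖y‖_∞)dy. Then for any z, E[ κ(ρ(z, g(X))/γ)^2 ] ≤ (γ L_h / r̄)^p V_κ, where g satisfies h(g(y)) = y. -/

import Mathlib

open MeasureTheory

open Set NNReal ENNReal

lemma map_abs_volume :
    Measure.map (fun x : ℝ => |x|) volume = (2 : ℝ≥0) • volume.restrict (Set.Ici 0) := by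
  ext s hs
  rw [Measure.map_apply measurable_abs hs]
  have hpre : (fun x : ℝ => |x|) ⁻¹' s = (s ∩ Ici 0) ∪ (Neg.neg ⁻¹' (s ∩ Ioi 0)) := by
    ext x
    simp only [mem_preimage, mem_union, mem_inter_iff, mem_Ici, mem_Ioi]
    rcases le_or_gt 0 x with hx | hx
    · rw [abs_of_nonneg hx]
      constructor
      · exact fun h => Or.inl ⟨h, hx⟩
      · rintro (⟨h, _⟩ | ⟨h, h0⟩)
        · exact h
        · exact absurd h0 (by linarith)
    · rw [abs_of_neg hx]
      constructor
      · exact fun h => Or.inr ⟨h, by linarith⟩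
      · rintro (⟨h, h0⟩ | ⟨h, _⟩)
        · exact absurd h0 (by linarith)
        · exact h
  have hm2 : MeasurableSet (Neg.neg ⁻¹' (s ∩ Ioi (0:ℝ))) :=
    (hs.inter measurableSet_Ioi).preimage measurable_neg
  have hdisj : Disjoint (s ∩ Ici (0:ℝ)) (Neg.neg ⁻¹' (s ∩ Ioi 0)) := by
    rw [Set.disjoint_left]
    rintro x ⟨_, hx1⟩ ⟨_, hx2⟩
    simp only [mem_Ici] at hx1
    simp only [mem_Ioi] at hx2
    linarith
  rw [hpre, measure_union hdisj hm2]
  have h2 : volume (Neg.neg ⁻¹' (s ∩ Ioi (0:ℝ))) = volume (s ∩ Ioi 0) := by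
    rw [← Measure.map_apply measurable_neg (hs.inter measurableSet_Ioi),
      Measure.map_neg_eq_self]
  have h3 : volume (s ∩ Ioi (0:ℝ)) = volume (s ∩ Ici 0) := by
    refine measure_congr (ae_eq_set_inter (ae_eq_refl s) (Ioi_ae_eq_Ici))
  rw [h2, h3, Measure.smul_apply, Measure.restrict_apply hs, two_smul]

lemma map_absPi_volume (p : ℕ) :
    Measure.map (fun y : Fin p → ℝ => fun i => |y i|) volume
      = ((2:ℝ≥0)^p) • volume.restrict {y : Fin p → ℝ | ∀ i, 0 ≤ y i} := by
  have hT : Measurable (fun y : Fin p → ℝ => fun i => |y i|) :=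
    measurable_pi_lambda _ fun i => (measurable_pi_apply i).abs
  have h1 : Measure.map (fun y : Fin p → ℝ => fun i => |y i|) volume
      = Measure.pi (fun _ : Fin p => (2 : ℝ≥0) • volume.restrict (Set.Ici 0)) := by
    refine (Measure.pi_eq (μ := fun _ : Fin p => (2 : ℝ≥0) • volume.restrict (Set.Ici 0))
      fun s hs => ?_).symm
    rw [Measure.map_apply hT (MeasurableSet.univ_pi hs)]
    have hpre : (fun y : Fin p → ℝ => fun i => |y i|) ⁻¹' (Set.pi univ s)
        = Set.pi univ (fun i => (fun x : ℝ => |x|) ⁻¹' (s i)) := by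
      ext y; simp [Set.mem_pi]
    rw [hpre, volume_pi_pi]
    refine Finset.prod_congr rfl fun i _ => ?_
    rw [← map_abs_volume, Measure.map_apply measurable_abs (hs i)]
  have h2 : ((2:ℝ≥0)^p) • volume.restrict {y : Fin p → ℝ | ∀ i, 0 ≤ y i}
      = Measure.pi (fun _ : Fin p => (2 : ℝ≥0) • volume.restrict (Set.Ici 0)) := by
    refine (Measure.pi_eq (μ := fun _ : Fin p => (2 : ℝ≥0) • volume.restrict (Set.Ici 0))
      fun s hs => ?_).symm
    have horth : {y : Fin p → ℝ | ∀ i, 0 ≤ y i} = Set.pi univ (fun _ => Set.Ici (0:ℝ)) := by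
      ext y
      simp only [Set.mem_setOf_eq, Set.mem_pi, Set.mem_univ, Set.mem_Ici, true_implies]
    rw [Measure.smul_apply, Measure.restrict_apply (MeasurableSet.univ_pi hs), horth,
      ← Set.pi_inter_distrib, volume_pi_pi]
    have : ∀ i : Fin p, ((2:ℝ≥0) • volume.restrict (Set.Ici (0:ℝ))) (s i)
        = 2 * volume (s i ∩ Set.Ici 0) := by
      intro i
      rw [Measure.smul_apply, Measure.restrict_apply (hs i), ENNReal.smul_def, smul_eq_mul]
      norm_num
    rw [Finset.prod_congr rfl fun i _ => this i, Finset.prod_mul_distrib, Finset.prod_const,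
      Finset.card_univ, Fintype.card_fin, ENNReal.smul_def, smul_eq_mul]
    push_cast
    ring
  rw [h1, h2]

lemma integral_norm_absPi {p : ℕ} (F : ℝ → ℝ) (hF : Measurable F) :
    ∫ y : Fin p → ℝ, F ‖y‖ = (2:ℝ)^p * ∫ y in {y : Fin p → ℝ | ∀ i, 0 ≤ y i}, F ‖y‖ := by
  have hT : Measurable (fun y : Fin p → ℝ => fun i => |y i|) :=
    measurable_pi_lambda _ fun i => (measurable_pi_apply i).abs
  have hnorm : ∀ y : Fin p → ℝ, ‖(fun i => |y i|)‖ = ‖y‖ := by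
    intro y
    simp only [Pi.norm_def]
    congr 1
    exact Finset.sup_congr rfl fun i _ => by simp [Real.nnnorm_abs]
  have h2 : ∫ x, (fun x : Fin p → ℝ => F ‖x‖) x
        ∂(Measure.map (fun y : Fin p → ℝ => fun i => |y i|) volume)
      = ∫ y : Fin p → ℝ, (fun x : Fin p → ℝ => F ‖x‖) (fun i => |y i|) :=
    integral_map hT.aemeasurable ((hF.comp measurable_norm).aestronglyMeasurable)
  have key : ∫ y : Fin p → ℝ, F ‖y‖ = ∫ x, F ‖x‖ ∂(Measure.map (fun y : Fin p → ℝ => fun i => |y i|) volume) := by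
    rw [h2]
    exact integral_congr_ae (Filter.Eventually.of_forall fun y => by
      show F ‖y‖ = F ‖(fun i => |y i|)‖
      rw [hnorm y])
  rw [key, map_absPi_volume, ENNReal.smul_def, integral_smul_measure]
  norm_num

/-- Upper bound on the second moment of the kernel weight: if the density `f` of
`X` is bounded above by `(2rbar)⁻ᵖ`, `h` is `L_h`-Lipschitz with `h ∘ g = id`, and
`κ : ℝ₊ → [0,1]` is nonincreasing with `κ(u) = 0` for `u > 1`, then
`E[κ(ρ(z, g(X))/γ)²] ≤ (γ L_h / rbar)ᵖ V_κ`. -/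
theorem stmt_8 {Z : Type*} [MetricSpace Z] {p : ℕ}
    (rbar γ Lh : ℝ) (hr : 0 < rbar) (hγ : 0 < γ) (hLh : 0 < Lh)
    (f : (Fin p → ℝ) → ℝ) (hf_meas : Measurable f) (hf_nonneg : ∀ y, 0 ≤ f y)
    (hf_int : Integrable f) (hf_prob : ∫ y, f y = 1)
    (hf_ub : ∀ y, f y ≤ ((2 * rbar) ^ p)⁻¹)
    (g : (Fin p → ℝ) → Z) (h : Z → (Fin p → ℝ))
    (hinv : ∀ y, h (g y) = y)
    (hLiph : ∀ z z', ‖h z - h z'‖ ≤ Lh * dist z z')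
    (κ : ℝ → ℝ) (hκ_meas : Measurable κ)
    (hrange : ∀ u, 0 ≤ u → κ u ∈ Set.Icc (0:ℝ) 1)
    (hmono : ∀ u v, 0 ≤ u → u ≤ v → κ v ≤ κ u)
    (hvanish : ∀ u, 1 < u → κ u = 0)
    (Vκ : ℝ) (hV : Vκ = ∫ y in {y : Fin p → ℝ | ∀ i, 0 ≤ y i}, κ ‖y‖)
    (z : Z) :
    ∫ y, (κ (dist z (g y) / γ)) ^ 2 * f y ≤ (γ * Lh / rbar) ^ p * Vκ := by
  set c : ℝ := γ * Lh with hc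
  have hcpos : 0 < c := mul_pos hγ hLh
  set M : ℝ := ((2 * rbar) ^ p)⁻¹ with hM
  have hMpos : 0 < M := by positivity
  have hκ0 : ∀ u, 0 ≤ u → 0 ≤ κ u := fun u hu => (hrange u hu).1
  have hκ1 : ∀ u, 0 ≤ u → κ u ≤ 1 := fun u hu => (hrange u hu).2
  set G : (Fin p → ℝ) → ℝ := fun y => M * κ (‖h z - y‖ / c) with hGdef
  have hGmeas : Measurable G :=
    measurable_const.mul (hκ_meas.comp ((measurable_const.sub measurable_id).norm.div_const c))
  have hpt : ∀ y, κ (dist z (g y) / γ) ^ 2 * f y ≤ G y := by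
    intro y
    have hd : (0:ℝ) ≤ dist z (g y) / γ := div_nonneg dist_nonneg hγ.le
    have hv : (0:ℝ) ≤ ‖h z - y‖ / c := div_nonneg (norm_nonneg _) hcpos.le
    have hvu : ‖h z - y‖ / c ≤ dist z (g y) / γ := by
      rw [div_le_div_iff₀ hcpos hγ]
      have hlip := hLiph z (g y)
      rw [hinv y] at hlip
      nlinarith [dist_nonneg (x := z) (y := g y)]
    have h1 : κ (dist z (g y) / γ) ^ 2 ≤ κ (‖h z - y‖ / c) := by
      calc κ (dist z (g y) / γ) ^ 2 ≤ κ (dist z (g y) / γ) := by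
            nlinarith [hκ0 _ hd, hκ1 _ hd]
        _ ≤ κ (‖h z - y‖ / c) := hmono _ _ hv hvu
    calc κ (dist z (g y) / γ) ^ 2 * f y ≤ κ (‖h z - y‖ / c) * f y :=
          mul_le_mul_of_nonneg_right h1 (hf_nonneg y)
      _ ≤ κ (‖h z - y‖ / c) * M := mul_le_mul_of_nonneg_left (hf_ub y) (hκ0 _ hv)
      _ = G y := mul_comm _ _
  have hGvanish : ∀ y, y ∉ Metric.closedBall (h z) c → G y = 0 := by
    intro y hy
    have : c < ‖h z - y‖ := by
      rw [Metric.mem_closedBall, dist_eq_norm, ← norm_sub_rev] at hy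
      linarith [not_le.mp hy]
    have h1 : (1:ℝ) < ‖h z - y‖ / c := (one_lt_div hcpos).mpr this
    simp [hGdef, hvanish _ h1]
  have hGint : Integrable G := by
    have hind : Integrable
        (Set.indicator (Metric.closedBall (h z) c) (fun _ => M) : (Fin p → ℝ) → ℝ) := by
      rw [integrable_indicator_iff measurableSet_closedBall]
      exact (integrableOn_const_iff).mpr (Or.inr measure_closedBall_lt_top)
    refine hind.mono' hGmeas.aestronglyMeasurable (Filter.Eventually.of_forall fun y => ?_)
    by_cases hy : y ∈ Metric.closedBall (h z) c
    · have hv : (0:ℝ) ≤ ‖h z - y‖ / c := div_nonneg (norm_nonneg _) hcpos.le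
      rw [Real.norm_eq_abs, abs_of_nonneg (mul_nonneg hMpos.le (hκ0 _ hv)),
        Set.indicator_of_mem hy]
      calc M * κ (‖h z - y‖ / c) ≤ M * 1 := by
            exact mul_le_mul_of_nonneg_left (hκ1 _ hv) hMpos.le
        _ = M := mul_one M
    · rw [hGvanish y hy, Set.indicator_of_notMem hy]
      simp
  have hle : ∫ y, κ (dist z (g y) / γ) ^ 2 * f y ≤ ∫ y, G y :=
    integral_mono_of_nonneg
      (Filter.Eventually.of_forall fun y => mul_nonneg (sq_nonneg _) (hf_nonneg y))
      hGint (Filter.Eventually.of_forall hpt)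
  refine hle.trans (le_of_eq ?_)
  have e1 : ∫ y, G y = M * ∫ y, κ (‖h z - y‖ / c) := by
    simp only [hGdef]
    exact integral_const_mul M _
  have e2 : ∫ y : Fin p → ℝ, κ (‖h z - y‖ / c) = ∫ x : Fin p → ℝ, κ (‖x‖ / c) :=
    integral_sub_left_eq_self (fun x : Fin p → ℝ => κ (‖x‖ / c)) volume (h z)
  have e3 : ∫ x : Fin p → ℝ, κ (‖x‖ / c) = c ^ p * ∫ x : Fin p → ℝ, κ ‖x‖ := by
    have : ∀ x : Fin p → ℝ, κ (‖x‖ / c) = (fun x : Fin p → ℝ => κ ‖x‖) (c⁻¹ • x) := by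
      intro x
      simp only [norm_smul, norm_inv, Real.norm_eq_abs, abs_of_pos hcpos]
      rw [div_eq_inv_mul]
    rw [integral_congr_ae (Filter.Eventually.of_forall this),
      Measure.integral_comp_inv_smul_of_nonneg volume (fun x : Fin p → ℝ => κ ‖x‖) hcpos.le,
      Module.finrank_fin_fun, smul_eq_mul]
  have e4 : ∫ x : Fin p → ℝ, κ ‖x‖ = (2:ℝ)^p * Vκ := by
    rw [integral_norm_absPi κ hκ_meas, hV]
  rw [e1, e2, e3, e4, hM, hc]
  field_simp
  have hr' : rbar ^ p * rbar⁻¹ ^ p = 1 := by rw [← mul_pow, mul_inv_cancel₀ hr.ne', one_pow]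
  linear_combination (-(γ ^ p * Lh ^ p * Vκ * 2 ^ p)) * hr'
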